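/- In the security game with n ≥ 2 players, where each player i chooses a security level s_i ∈ [0, P] (P > 0), and a player's payoff is −P if her security level equals the minimum of all chosen levels, and −s_i otherwise, the unique pure Nash equilibrium is the profile where every player chooses s_i = P. -/

import Mathlib

/-- Payoff in the security game: a player whose security level equals the
minimum of all chosen levels is compromised and pays the penalty `P`;
every other player pays her own security level. -/
noncomputable def secPayoff (n : ℕ) (P : ℝ) (s : Fin n → ℝ) (i : Fin n) : ℝ :=
  if s i = sInf (Set.range s) then -P else -(s i)

/-- Pure Nash equilibrium of the security game with levels restricted to `[0,P]`:
no player can strictly increase her payoff by a unilateral deviation. -/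
def secNash (n : ℕ) (P : ℝ) (s : Fin n → ℝ) : Prop :=
  ∀ i : Fin n, ∀ t ∈ Set.Icc (0:ℝ) P,
    secPayoff n P (Function.update s i t) i ≤ secPayoff n P s i

/-- The unique pure Nash equilibrium of the security game is the all-`P` profile. -/
theorem security_unique_pure_nash (n : ℕ) (hn : 2 ≤ n) (P : ℝ) (hP : 0 < P)
    (s : Fin n → ℝ) (hs : ∀ i, s i ∈ Set.Icc (0:ℝ) P) :
    secNash n P s ↔ s = fun _ => P := by
  haveI : Nonempty (Fin n) := ⟨⟨0, by omega⟩⟩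
  constructor
  · intro hN
    -- let m be the minimum
    set m := sInf (Set.range s) with hm
    have hfin : (Set.range s).Finite := Set.finite_range s
    have hne : (Set.range s).Nonempty := Set.range_nonempty s
    have hmem : m ∈ Set.range s := hne.csInf_mem hfin
    have hle : ∀ i, m ≤ s i := fun i => csInf_le hfin.bddBelow (Set.mem_range_self i)
    obtain ⟨i0, hi0⟩ := hmem
    -- claim m = P
    have hmP : m = P := by
      by_contra hmne
      have hmlt : m < P := lt_of_le_of_ne ((hs i0).2.trans_eq' hi0) hmne
      have hm0 : 0 ≤ m := hi0 ▸ (hs i0).1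
      -- pick j ≠ i0
      obtain ⟨j, hj⟩ : ∃ j : Fin n, j ≠ i0 := by
        rcases eq_or_ne i0 ⟨0, by omega⟩ with h | h
        · exact ⟨⟨1, by omega⟩, by simp [h, Fin.ext_iff]⟩
        · exact ⟨⟨0, by omega⟩, fun hc => h hc.symm⟩
      -- current effective cost of j
      set c : ℝ := if s j = m then P else s j with hc
      have hcub : c ≤ P := by
        rcases eq_or_ne (s j) m with h | h
        · simp [hc, h]
        · simp [hc, h, (hs j).2]
      have hclb : m < c := by
        rcases eq_or_ne (s j) m with h | h
        · simp [hc, h, hmlt]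
        · simp only [hc, h, if_false]
          exact lt_of_le_of_ne (hle j) (Ne.symm h)
      have hpayj : secPayoff n P s j = -c := by
        rcases eq_or_ne (s j) m with h | h
        · simp [secPayoff, hc, h, ← hm]
        · simp [secPayoff, hc, h, ← hm]
      set t : ℝ := (m + c) / 2 with ht
      have htmem : t ∈ Set.Icc (0:ℝ) P := ⟨by simp only [ht]; linarith, by simp only [ht]; linarith⟩
      have htlt : m < t := by simp only [ht]; linarith
      have htc : t < c := by simp only [ht]; linarith
      have hNj := hN j t htmem
      -- compute deviation payoff
      have hupd_i0 : Function.update s j t i0 = m := by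
        rw [Function.update_of_ne (Ne.symm hj), hi0]
      have hsInf' : sInf (Set.range (Function.update s j t)) ≤ m := by
        refine csInf_le (Set.finite_range _).bddBelow ⟨i0, hupd_i0⟩
      have hdev : secPayoff n P (Function.update s j t) j = -t := by
        have : Function.update s j t j = t := Function.update_self j t s
        rw [secPayoff, this, if_neg]
        intro h
        exact absurd (h ▸ hsInf') (not_le.mpr htlt)
      rw [hdev, hpayj] at hNj
      linarith
    -- conclude all coordinates are P
    funext i
    exact le_antisymm (hs i).2 (hmP ▸ hle i)
  · rintro rfl
    intro i t ht
    have hrange : sInf (Set.range (fun _ : Fin n => P)) = P := by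
      rw [Set.range_const, csInf_singleton]
    have hcur : secPayoff n P (fun _ => P) i = -P := by
      simp [secPayoff, hrange]
    rw [hcur]
    -- deviation: t becomes the minimum
    have hlb : ∀ x ∈ Set.range (Function.update (fun _ : Fin n => P) i t), t ≤ x := by
      rintro x ⟨j, rfl⟩
      rcases eq_or_ne j i with rfl | h
      · simp
      · rw [Function.update_of_ne h]; exact ht.2
    have hub : sInf (Set.range (Function.update (fun _ : Fin n => P) i t)) ≤ t :=
      csInf_le (Set.finite_range _).bddBelow ⟨i, by simp⟩
    have heq : sInf (Set.range (Function.update (fun _ : Fin n => P) i t)) = t :=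
      le_antisymm hub (le_csInf (Set.range_nonempty _) hlb)
    simp [secPayoff, heq]
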